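/- Let Γ be a finite abelian group with a nondegenerate symmetric bimultiplicative form B_Q : Γ × Γ → ℂˣ, and let σ : Γ × Γ → ℂˣ be a normalised symmetric 2-cochain with σ² = B_Q such that ω(a,b,c) := σ(a,b)σ(a,c)σ(a,b+c)⁻¹ takes values in {±1} and is a homomorphism in a. Let s, l ∈ Γ with s − l ∈ 2Γ, and let r̄ be a coset of 2Γ in Γ. Then |2Γ|⁻¹ · Σ_{r ∈ r̄} σ(r,s)·σ(r,l)⁻¹ equals 1 if s = l and 0 otherwise. -/

import Mathlib

open scoped Classical

/-- `∂(σ)(a;b,c) = σ(a,b) σ(a,c) σ(a,b+c)⁻¹`. -/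
def dOmega {Γ : Type*} [AddCommGroup Γ] (σ : Γ → Γ → ℂˣ) (a b c : Γ) : ℂˣ :=
  σ a b * σ a c * (σ a (b + c))⁻¹

/-- The character sum lemma: if `B_Q` is nondegenerate symmetric bimultiplicative,
`σ` a normalised symmetric 2-cochain with `σ² = B_Q` whose `ω = ∂(σ)` takes values in
`{±1}` and is a homomorphism in the first argument, `s - l ∈ 2Γ` and `r̄ = r₀ + 2Γ` a
coset of `2Γ`, then `|2Γ|⁻¹ Σ_{r ∈ r̄} σ(r,s) σ(r,l)⁻¹ = δ_{s,l}`. -/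
theorem stmt_7 (Γ : Type*) [AddCommGroup Γ] [Fintype Γ]
    (B σ : Γ → Γ → ℂˣ)
    (hBsym : ∀ a b : Γ, B a b = B b a)
    (hBbi₁ : ∀ a a' b : Γ, B (a + a') b = B a b * B a' b)
    (hBbi₂ : ∀ a b b' : Γ, B a (b + b') = B a b * B a b')
    (hBnd : ∀ a : Γ, (∀ b : Γ, B a b = 1) → a = 0)
    (hσsym : ∀ a b : Γ, σ a b = σ b a)
    (hσnorm : ∀ a : Γ, σ a 0 = 1 ∧ σ 0 a = 1)
    (hσsq : ∀ a b : Γ, (σ a b) ^ 2 = B a b)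
    (hωpm : ∀ a b c : Γ, dOmega σ a b c = 1 ∨ dOmega σ a b c = -1)
    (hωhom : ∀ a a' b c : Γ, dOmega σ (a + a') b c = dOmega σ a b c * dOmega σ a' b c)
    (s l r₀ : Γ) (hsl : ∃ a : Γ, s - l = 2 • a) :
    (((Finset.univ.filter fun x : Γ => ∃ a : Γ, x = 2 • a).card : ℂ))⁻¹ *
      ∑ r ∈ Finset.univ.filter fun r : Γ => ∃ a : Γ, r = r₀ + 2 • a,
        ((σ r s : ℂˣ) : ℂ) * (((σ r l : ℂˣ) : ℂ))⁻¹ =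
      if s = l then 1 else 0 := by
  obtain ⟨t, ht⟩ := hsl
  have hs : s = l + 2 • t := by rw [← ht]; abel
  set S : Finset Γ := Finset.univ.filter fun x : Γ => ∃ a : Γ, x = 2 • a with hSdef
  set C : Finset Γ := Finset.univ.filter fun r : Γ => ∃ a : Γ, r = r₀ + 2 • a with hCdef
  have hinj : Function.Injective (fun x : Γ => r₀ + x) := fun a b h => by simpa using h
  have hC : C = S.image (fun x => r₀ + x) := by
    ext r
    simp only [hCdef, hSdef, Finset.mem_image, Finset.mem_filter, Finset.mem_univ, true_and]
    constructor
    · rintro ⟨a, rfl⟩; exact ⟨2 • a, ⟨a, rfl⟩, rfl⟩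
    · rintro ⟨x, ⟨a, rfl⟩, rfl⟩; exact ⟨a, rfl⟩
  have hcardC : C.card = S.card := by
    rw [hC, Finset.card_image_of_injective _ hinj]
  have hScard : (S.card : ℂ) ≠ 0 := by
    have h0 : (0:Γ) ∈ S := by
      simp only [hSdef, Finset.mem_filter, Finset.mem_univ, true_and]
      exact ⟨0, by simp⟩
    have hp : 0 < S.card := Finset.card_pos.mpr ⟨0, h0⟩
    exact_mod_cast hp.ne'
  by_cases hsl' : s = l
  · subst hsl'
    rw [if_pos rfl]
    have hone : ∀ r ∈ C, ((σ r s : ℂˣ) : ℂ) * (((σ r s : ℂˣ) : ℂ))⁻¹ = 1 :=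
      fun r _ => mul_inv_cancel₀ (Units.ne_zero _)
    rw [Finset.sum_congr rfl hone, Finset.sum_const, nsmul_eq_mul, mul_one, hcardC]
    exact inv_mul_cancel₀ hScard
  · rw [if_neg hsl']
    set F : Γ → ℂ := fun r =>
      ((B r t : ℂˣ) : ℂ) * (((dOmega σ r l (2 • t) : ℂˣ) : ℂ))⁻¹ *
        (((dOmega σ r t t : ℂˣ) : ℂ))⁻¹ with hFdef
    have hpoint : ∀ r : Γ, ((σ r s : ℂˣ) : ℂ) * (((σ r l : ℂˣ) : ℂ))⁻¹ = F r := by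
      intro r
      have e1 : ((dOmega σ r l (2 • t) : ℂˣ) : ℂ) =
          ((σ r l : ℂˣ) : ℂ) * ((σ r (2 • t) : ℂˣ) : ℂ) * (((σ r s : ℂˣ) : ℂ))⁻¹ := by
        rw [show dOmega σ r l (2 • t) = σ r l * σ r (2 • t) * (σ r s)⁻¹ from by
          rw [dOmega, ← hs]]
        simp [Units.val_mul, Units.val_inv_eq_inv_val]
      have e2 : ((dOmega σ r t t : ℂˣ) : ℂ) =
          ((B r t : ℂˣ) : ℂ) * (((σ r (2 • t) : ℂˣ) : ℂ))⁻¹ := by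
        rw [show dOmega σ r t t = B r t * (σ r (2 • t))⁻¹ from by
          rw [dOmega, ← two_nsmul, ← hσsq, sq]]
        simp [Units.val_mul, Units.val_inv_eq_inv_val]
      have n1 : ((σ r l : ℂˣ) : ℂ) ≠ 0 := Units.ne_zero _
      have n2 : ((σ r s : ℂˣ) : ℂ) ≠ 0 := Units.ne_zero _
      have n3 : ((σ r (2 • t) : ℂˣ) : ℂ) ≠ 0 := Units.ne_zero _
      have n4 : ((B r t : ℂˣ) : ℂ) ≠ 0 := Units.ne_zero _
      rw [hFdef]
      simp only []
      rw [e1, e2]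
      field_simp
    have hFhom : ∀ r r' : Γ, F (r + r') = F r * F r' := by
      intro r r'
      have b1 : ((B (r + r') t : ℂˣ) : ℂ) = ((B r t : ℂˣ) : ℂ) * ((B r' t : ℂˣ) : ℂ) := by
        rw [hBbi₁]; simp [Units.val_mul]
      have w1 : ((dOmega σ (r + r') l (2 • t) : ℂˣ) : ℂ) =
          ((dOmega σ r l (2 • t) : ℂˣ) : ℂ) * ((dOmega σ r' l (2 • t) : ℂˣ) : ℂ) := by
        rw [hωhom]; simp [Units.val_mul]
      have w2 : ((dOmega σ (r + r') t t : ℂˣ) : ℂ) =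
          ((dOmega σ r t t : ℂˣ) : ℂ) * ((dOmega σ r' t t : ℂˣ) : ℂ) := by
        rw [hωhom]; simp [Units.val_mul]
      rw [hFdef]
      simp only []
      rw [b1, w1, w2]
      field_simp
    -- find c with B c (s - l) ≠ 1
    obtain ⟨c, hc⟩ : ∃ c : Γ, B c (s - l) ≠ 1 := by
      by_contra h
      push_neg at h
      exact hsl' (sub_eq_zero.mp (hBnd (s - l) fun b => (hBsym (s - l) b).trans (h b)))
    have hX2 : ((dOmega σ c l (2 • t) : ℂˣ) : ℂ) ^ 2 = 1 := by
      rcases hωpm c l (2 • t) with h | h <;> rw [h] <;> simp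
    have hY2 : ((dOmega σ c t t : ℂˣ) : ℂ) ^ 2 = 1 := by
      rcases hωpm c t t with h | h <;> rw [h] <;> simp
    have hB2u : (B c t) ^ 2 = B c (s - l) := by
      rw [sq, ← hBbi₂, ← two_nsmul, ← ht]
    have hB2 : ((B c t : ℂˣ) : ℂ) ^ 2 = ((B c (s - l) : ℂˣ) : ℂ) := by
      rw [← Units.val_pow_eq_pow_val, hB2u]
    have hFg : F (2 • c) = ((B c (s - l) : ℂˣ) : ℂ) := by
      rw [two_nsmul, hFhom]
      have expand : F c * F c =
          ((B c t : ℂˣ) : ℂ) ^ 2 * (((dOmega σ c l (2 • t) : ℂˣ) : ℂ) ^ 2)⁻¹ *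
            (((dOmega σ c t t : ℂˣ) : ℂ) ^ 2)⁻¹ := by
        rw [hFdef]; ring
      rw [expand, hX2, hY2, hB2]
      simp
    have hFgne : F (2 • c) ≠ 1 := by
      rw [hFg]
      intro h
      exact hc (Units.ext (by simpa using h))
    have hshift : S.image (fun x => 2 • c + x) = S := by
      apply Finset.eq_of_subset_of_card_le
      · intro y hy
        simp only [hSdef, Finset.mem_image, Finset.mem_filter, Finset.mem_univ, true_and] at hy ⊢
        obtain ⟨x, ⟨a, rfl⟩, rfl⟩ := hy
        exact ⟨c + a, by rw [smul_add]⟩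
      · rw [Finset.card_image_of_injective _ (fun a b h => by simpa using h : Function.Injective (fun x : Γ => 2 • c + x))]
    have hSzero : ∑ x ∈ S, F x = 0 := by
      have key : ∑ x ∈ S, F x = F (2 • c) * ∑ x ∈ S, F x := by
        conv_lhs => rw [← hshift]
        rw [Finset.sum_image (fun a _ b _ h => by simpa using h)]
        simp_rw [hFhom]
        rw [← Finset.mul_sum]
      have : (F (2 • c) - 1) * ∑ x ∈ S, F x = 0 := by
        rw [sub_mul, one_mul, ← key, sub_self]
      rcases mul_eq_zero.mp this with h | h
      · exact absurd (by linear_combination h : F (2 • c) = 1) hFgne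
      · exact h
    rw [Finset.sum_congr rfl (fun r _ => hpoint r), hC,
      Finset.sum_image (fun a _ b _ h => hinj h)]
    show ((S.card : ℂ))⁻¹ * ∑ x ∈ S, F (r₀ + x) = 0
    simp_rw [hFhom]
    rw [← Finset.mul_sum, hSzero, mul_zero, mul_zero]
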